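/- Let s be a real polynomial of degree ≤ k and L > 0. If for every δ > 0 there exists μ ∈ (L-δ, L) with |s(μ)·μ + 1| < (1 - μ/L)^(k+1), then the polynomial q(μ) := s(L(1-μ))·L(1-μ) + 1 equals μ^(k+1) identically. -/

import Mathlib

open Polynomial Filter Topology

/-- If a polynomial is bounded by `C * ν^(m+1)` at points arbitrarily close to `0`
from the right, then it vanishes at `0`. -/
lemma aux_eval_zero (C : ℝ) (m : ℕ) (r : Polynomial ℝ)
    (h : ∀ δ > 0, ∃ ν ∈ Set.Ioo (0:ℝ) δ, |r.eval ν| ≤ C * ν ^ (m+1)) :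
    r.eval 0 = 0 := by
  choose ν hν hb using fun n : ℕ => h (1/(n+1)) (by positivity)
  have hν0 : ∀ n, 0 < ν n := fun n => (hν n).1
  have htend : Tendsto ν atTop (nhds 0) := by
    apply squeeze_zero (fun n => (hν0 n).le) (fun n => (hν n).2.le)
    exact tendsto_one_div_add_atTop_nhds_zero_nat
  have h1 : Tendsto (fun n => |r.eval (ν n)|) atTop (nhds |r.eval 0|) := by
    have hc : Continuous fun x : ℝ => |r.eval x| := (Polynomial.continuous r).abs
    exact (hc.tendsto 0).comp htend
  have h2 : Tendsto (fun n => C * ν n ^ (m+1)) atTop (nhds 0) := by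
    have := (tendsto_const_nhds (x := C)).mul (htend.pow (m+1))
    simpa using this
  have hle : |r.eval 0| ≤ 0 := le_of_tendsto_of_tendsto' h1 h2 hb
  have := abs_nonneg (r.eval 0)
  have : |r.eval 0| = 0 := le_antisymm hle this
  exact abs_eq_zero.mp this

lemma aux_zero (C : ℝ) : ∀ n, ∀ r : Polynomial ℝ, r.natDegree ≤ n →
    (∀ δ > 0, ∃ ν ∈ Set.Ioo (0:ℝ) δ, |r.eval ν| ≤ C * ν ^ (n+1)) → r = 0 := by
  intro n
  induction n with
  | zero =>
    intro r hdeg h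
    have h0 := aux_eval_zero C 0 r h
    have hr := Polynomial.eq_C_of_natDegree_le_zero hdeg
    rw [hr] at h0 ⊢
    simp at h0
    simp [h0]
  | succ n ih =>
    intro r hdeg h
    have h0 := aux_eval_zero C (n+1) r h
    have hdvd : Polynomial.X ∣ r := by
      rw [Polynomial.X_dvd_iff, Polynomial.coeff_zero_eq_eval_zero]; exact h0
    obtain ⟨r₁, rfl⟩ := hdvd
    by_cases hr1 : r₁ = 0
    · simp [hr1]
    have hdeg1 : r₁.natDegree ≤ n := by
      have hmul := Polynomial.natDegree_mul (Polynomial.X_ne_zero (R := ℝ)) hr1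
      rw [hmul, Polynomial.natDegree_X] at hdeg
      omega
    have hz : r₁ = 0 := by
      apply ih r₁ hdeg1
      intro δ hδ
      obtain ⟨νv, hνm, hb⟩ := h δ hδ
      refine ⟨νv, hνm, ?_⟩
      have hν0 : 0 < νv := hνm.1
      rw [Polynomial.eval_mul, Polynomial.eval_X, abs_mul, abs_of_pos hν0] at hb
      have hrw : C * νv ^ (n + 1 + 1) = νv * (C * νv ^ (n + 1)) := by ring
      rw [hrw] at hb
      exact (mul_le_mul_iff_right₀ hν0).mp hb
    exact absurd hz hr1

theorem stmt2 (k : ℕ) (s : Polynomial ℝ) (hs : s.natDegree ≤ k) (L : ℝ) (hL : 0 < L)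
    (h : ∀ δ > 0, ∃ μ ∈ Set.Ioo (L - δ) L, |s.eval μ * μ + 1| < (1 - μ / L) ^ (k + 1)) :
    ∀ μ : ℝ, s.eval (L * (1 - μ)) * (L * (1 - μ)) + 1 = μ ^ (k + 1) := by
  set g : Polynomial ℝ := Polynomial.C L * (1 - Polynomial.X) with hg
  set p : Polynomial ℝ := s.comp g * g + 1 with hp
  have hpe : ∀ μ : ℝ, p.eval μ = s.eval (L * (1 - μ)) * (L * (1 - μ)) + 1 := by
    intro μ
    simp [hp, hg, Polynomial.eval_comp]
  have hdegg : g.natDegree ≤ 1 := by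
    rw [hg]
    compute_degree
  have hdegp : p.natDegree ≤ k + 1 := by
    apply le_trans (Polynomial.natDegree_add_le _ _)
    simp only [Polynomial.natDegree_one]
    rw [max_le_iff]
    constructor
    · apply le_trans (Polynomial.natDegree_mul_le)
      have h1 : (s.comp g).natDegree ≤ k := by
        rw [Polynomial.natDegree_comp]
        calc s.natDegree * g.natDegree ≤ k * 1 := Nat.mul_le_mul hs hdegg
          _ = k := by omega
      omega
    · omega
  set c : ℝ := p.coeff (k+1) with hc
  set r : Polynomial ℝ := p - Polynomial.C c * Polynomial.X ^ (k+1) with hr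
  have hdegr : r.natDegree ≤ k := by
    rw [Polynomial.natDegree_le_iff_coeff_eq_zero]
    intro m hm
    rw [hr]
    simp only [Polynomial.coeff_sub, Polynomial.coeff_C_mul, Polynomial.coeff_X_pow]
    rcases eq_or_lt_of_le (Nat.succ_le_of_lt hm) with heq | hlt
    · rw [← heq]
      simp [hc]
    · rw [Polynomial.coeff_eq_zero_of_natDegree_lt (lt_of_le_of_lt hdegp hlt)]
      simp [Nat.ne_of_gt hlt]
  have hrz : r = 0 := by
    apply aux_zero (1 + |c|) k r hdegr
    intro δ hδ
    obtain ⟨μv, hμm, hb⟩ := h (min (L * δ) L) (by positivity)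
    set νv : ℝ := 1 - μv / L with hν
    have hνpos : 0 < νv := by
      rw [hν]
      have : μv / L < 1 := (div_lt_one hL).mpr hμm.2
      linarith
    have hνlt : νv < δ := by
      have h1 : L - min (L * δ) L < μv := hμm.1
      have h2 : min (L * δ) L ≤ L * δ := min_le_left _ _
      have h3 : L - L * δ < μv := by linarith
      have heq : 1 - μv / L = (L - μv) / L := by field_simp
      rw [hν, heq, div_lt_iff₀ hL]
      nlinarith
    have hLν : L * (1 - νv) = μv := by
      rw [hν]
      field_simp
      ring
    refine ⟨νv, ⟨hνpos, hνlt⟩, ?_⟩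
    have hpν : |p.eval νv| < νv ^ (k+1) := by
      rw [hpe νv, hLν]
      have : 1 - μv / L = νv := hν.symm
      rw [← this]
      exact hb
    have : r.eval νv = p.eval νv - c * νv ^ (k+1) := by
      simp [hr]
    rw [this]
    calc |p.eval νv - c * νv ^ (k+1)| ≤ |p.eval νv| + |c * νv ^ (k+1)| := abs_sub _ _
      _ = |p.eval νv| + |c| * νv ^ (k+1) := by
          rw [abs_mul, abs_pow, abs_of_pos hνpos]
      _ ≤ νv ^ (k+1) + |c| * νv ^ (k+1) := by linarith
      _ = (1 + |c|) * νv ^ (k+1) := by ring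
  have hpc : p = Polynomial.C c * Polynomial.X ^ (k+1) := by
    have := sub_eq_zero.mp hrz
    exact this
  have hc1 : c = 1 := by
    have h1 : p.eval 1 = 1 := by
      rw [hpe 1]
      simp
    rw [hpc] at h1
    simpa using h1
  intro μ
  rw [← hpe μ, hpc, hc1]
  simp
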